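/- arXiv:1709.07172 — 3 statements merged into one kernel-verified Lean document; each statement's English description precedes it below -/
import Mathlib

section
/- Regret bound in the noise-free setting (Theorem 1): let P_1,...,P_n be tensors in [0,1]^{d×d×d} with entries summing to 1, let x_t be one-hot tensors, define ℓ_t(M) = ‖x_t − M‖_F², and let A_t = (1/t)·Σ_{s=1}^t P_s with A_0 arbitrary in the simplex. Then Σ_{t=2}^n (ℓ_t(A_{t−1}) − ℓ_t(A_t)) ≤ 4·sqrt(d³)·Σ_{t=2}^n (1/t) ≤ 4·sqrt(d³)·log n. -/
open Finset

lemma key_loss {ι : Type*} [Fintype ι] (x M M' : ι → ℝ)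
    (hxs : ∑ i, x i ≤ 1) (hx0 : ∀ i, 0 ≤ x i)
    (hM : ∀ i, 0 ≤ M i) (hM' : ∀ i, 0 ≤ M' i)
    (hMs : ∑ i, M i = 1) (hM's : ∑ i, M' i = 1)
    (c : ℝ) (hc : 0 ≤ c) (hd : ∀ i, |M i - M' i| ≤ c) :
    (∑ i, (x i - M i) ^ 2) - ∑ i, (x i - M' i) ^ 2 ≤ 4 * c := by
  have h2 : (∑ i, (x i - M i) ^ 2) - ∑ i, (x i - M' i) ^ 2
      = ∑ i, (2 * x i * (M' i - M i) + (M i - M' i) * (M i + M' i)) := by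
    rw [← Finset.sum_sub_distrib]
    exact Finset.sum_congr rfl fun i _ => by ring
  have h3 : ∑ i, (2 * x i * (M' i - M i) + (M i - M' i) * (M i + M' i))
      ≤ ∑ i, (x i * (2 * c) + c * (M i + M' i)) := by
    apply Finset.sum_le_sum
    intro i _
    have h := abs_le.mp (hd i)
    nlinarith [hx0 i, hM i, hM' i]
  have h4 : ∑ i, (x i * (2 * c) + c * (M i + M' i))
      = (∑ i, x i) * (2 * c) + c * ((∑ i, M i) + (∑ i, M' i)) := by
    rw [Finset.sum_add_distrib, ← Finset.sum_mul, ← Finset.mul_sum,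
      Finset.sum_add_distrib]
  have h5 : (∑ i, x i) * (2 * c) ≤ 1 * (2 * c) := by
    apply mul_le_mul_of_nonneg_right hxs; positivity
  rw [h2]
  calc _ ≤ _ := h3
    _ = _ := h4
    _ ≤ 1 * (2 * c) + c * (1 + 1) := by rw [hMs, hM's]; linarith
    _ = 4 * c := by ring

lemma sum_inv_le_log (n : ℕ) (hn : 1 ≤ n) :
    ∑ t ∈ Finset.Icc 2 n, (1 / (t : ℝ)) ≤ Real.log n := by
  induction n with
  | zero => omega
  | succ m ih =>
    rcases Nat.lt_or_ge m 1 with h | h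
    · interval_cases m
      simp
    · rw [Finset.sum_Icc_succ_top (by omega : 2 ≤ m + 1)]
      have hm : (1 : ℝ) ≤ (m : ℝ) := by exact_mod_cast h
      have hpos : (0 : ℝ) < (m : ℝ) / (m + 1) := by positivity
      have hlog := Real.log_le_sub_one_of_pos hpos
      rw [Real.log_div (by linarith) (by linarith)] at hlog
      have key : (1 : ℝ) / (m + 1) ≤ Real.log (m + 1) - Real.log m := by
        have : (m : ℝ) / (m + 1) - 1 = -(1 / (m + 1)) := by field_simp; ring
        rw [this] at hlog
        linarith
      have ihm := ih h
      push_cast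
      linarith

/-- regret bound in the noise-free setting (Theorem 1). -/
theorem noise_free_regret
    {d : ℕ} (n : ℕ) (hn : 1 ≤ n)
    (P : ℕ → Fin d → Fin d → Fin d → ℝ)
    (hP : ∀ s i j k, P s i j k ∈ Set.Icc (0 : ℝ) 1)
    (hPsum : ∀ s, ∑ i, ∑ j, ∑ k, P s i j k = 1)
    (x : ℕ → Fin d → Fin d → Fin d → ℝ)
    (hx : ∀ t, ∃ i₀ j₀ k₀ : Fin d, ∀ i j k,
      x t i j k = if i = i₀ ∧ j = j₀ ∧ k = k₀ then 1 else 0)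
    (A : ℕ → Fin d → Fin d → Fin d → ℝ)
    (hA0 : ∀ i j k, A 0 i j k ∈ Set.Icc (0 : ℝ) 1)
    (hA0sum : ∑ i, ∑ j, ∑ k, A 0 i j k = 1)
    (hA : ∀ t, 1 ≤ t → ∀ i j k,
      A t i j k = (1 / (t : ℝ)) * ∑ s ∈ Finset.Icc 1 t, P s i j k) :
    (∑ t ∈ Finset.Icc 2 n,
        ((∑ i, ∑ j, ∑ k, (x t i j k - A (t - 1) i j k) ^ 2)
          - (∑ i, ∑ j, ∑ k, (x t i j k - A t i j k) ^ 2)))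
        ≤ 4 * Real.sqrt ((d : ℝ) ^ 3) * ∑ t ∈ Finset.Icc 2 n, (1 / (t : ℝ)) ∧
      4 * Real.sqrt ((d : ℝ) ^ 3) * ∑ t ∈ Finset.Icc 2 n, (1 / (t : ℝ))
        ≤ 4 * Real.sqrt ((d : ℝ) ^ 3) * Real.log n := by
  have tri : ∀ (f : Fin d → Fin d → Fin d → ℝ),
      ∑ i, ∑ j, ∑ k, f i j k
        = ∑ p : Fin d × Fin d × Fin d, f p.1 p.2.1 p.2.2 := by
    intro f
    rw [Fintype.sum_prod_type]
    exact Finset.sum_congr rfl fun i _ => by rw [Fintype.sum_prod_type]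
  have hd0 : 0 < d := by
    by_contra h
    have hd : d = 0 := by omega
    subst hd
    have := hPsum 1
    simp at this
  have hsq : (1 : ℝ) ≤ Real.sqrt ((d : ℝ) ^ 3) := by
    rw [show (1 : ℝ) = Real.sqrt 1 by simp]
    apply Real.sqrt_le_sqrt
    have h1 : (1 : ℝ) ≤ (d : ℝ) := by exact_mod_cast hd0
    calc (1 : ℝ) = 1 ^ 3 := by norm_num
      _ ≤ (d : ℝ) ^ 3 := pow_le_pow_left₀ (by norm_num) h1 3
  have hsqnn : (0 : ℝ) ≤ Real.sqrt ((d : ℝ) ^ 3) := Real.sqrt_nonneg _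
  -- properties of A
  have hAnn : ∀ t, 1 ≤ t → ∀ i j k, 0 ≤ A t i j k := by
    intro t ht i j k
    rw [hA t ht i j k]
    have h1 : (0 : ℝ) ≤ ∑ s ∈ Finset.Icc 1 t, P s i j k :=
      Finset.sum_nonneg fun s _ => (hP s i j k).1
    positivity
  have hAsum : ∀ t, 1 ≤ t →
      ∑ p : Fin d × Fin d × Fin d, A t p.1 p.2.1 p.2.2 = 1 := by
    intro t ht
    have htR : (0 : ℝ) < (t : ℝ) := by exact_mod_cast ht
    simp_rw [hA t ht]
    rw [← Finset.mul_sum, Finset.sum_comm]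
    have : ∀ s ∈ Finset.Icc 1 t,
        ∑ p : Fin d × Fin d × Fin d, P s p.1 p.2.1 p.2.2 = 1 := by
      intro s _
      rw [← tri (P s)]
      exact hPsum s
    rw [Finset.sum_congr rfl this]
    simp
    field_simp
  -- diff bound
  have hdiff : ∀ t, 2 ≤ t → ∀ i j k,
      |A (t - 1) i j k - A t i j k| ≤ 1 / (t : ℝ) := by
    intro t ht i j k
    obtain ⟨m, rfl⟩ : ∃ m, t = m + 1 := ⟨t - 1, by omega⟩
    have hm1 : 1 ≤ m := by omega
    simp only [Nat.add_sub_cancel]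
    rw [hA m hm1 i j k, hA (m + 1) (by omega) i j k,
      Finset.sum_Icc_succ_top (by omega : 1 ≤ m + 1)]
    set S := ∑ s ∈ Finset.Icc 1 m, P s i j k with hS
    have hS0 : 0 ≤ S := Finset.sum_nonneg fun s _ => (hP s i j k).1
    have hSm : S ≤ (m : ℝ) := by
      calc S ≤ ∑ s ∈ Finset.Icc 1 m, (1 : ℝ) :=
          Finset.sum_le_sum fun s _ => (hP s i j k).2
        _ = (m : ℝ) := by simp
    have hP0 := (hP (m + 1) i j k).1
    have hP1 := (hP (m + 1) i j k).2
    have hmR : (1 : ℝ) ≤ (m : ℝ) := by exact_mod_cast hm1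
    have hmpos : (0 : ℝ) < (m : ℝ) := by linarith
    have hmp1 : (0 : ℝ) < (m : ℝ) + 1 := by linarith
    rw [abs_le]
    push_cast
    constructor
    · have expand : 1 / (m : ℝ) * S - 1 / ((m : ℝ) + 1) * (S + P (m + 1) i j k)
          + 1 / ((m : ℝ) + 1)
          = (S + (1 - P (m + 1) i j k) * m) / ((m : ℝ) * ((m : ℝ) + 1)) := by
        field_simp
        ring
      have hnn : (0 : ℝ) ≤ (S + (1 - P (m + 1) i j k) * m)
          / ((m : ℝ) * ((m : ℝ) + 1)) := by
        apply div_nonneg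
        · nlinarith
        · positivity
      linarith
    · have expand : 1 / (m : ℝ) * S - 1 / ((m : ℝ) + 1) * (S + P (m + 1) i j k)
          = (S - P (m + 1) i j k * m) / ((m : ℝ) * ((m : ℝ) + 1)) := by
        field_simp
        ring
      rw [expand, div_le_div_iff₀ (by positivity) hmp1]
      nlinarith [mul_le_mul_of_nonneg_right hSm hmp1.le,
        mul_nonneg (mul_nonneg hP0 hmpos.le) hmp1.le]
  -- per-step loss bound
  have hstep : ∀ t ∈ Finset.Icc 2 n,
      ((∑ i, ∑ j, ∑ k, (x t i j k - A (t - 1) i j k) ^ 2)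
        - (∑ i, ∑ j, ∑ k, (x t i j k - A t i j k) ^ 2))
      ≤ 4 * Real.sqrt ((d : ℝ) ^ 3) * (1 / (t : ℝ)) := by
    intro t htmem
    have ht2 : 2 ≤ t := (Finset.mem_Icc.mp htmem).1
    have htR : (0 : ℝ) < (t : ℝ) := by
      have : 0 < t := by omega
      exact_mod_cast this
    obtain ⟨i₀, j₀, k₀, hxt⟩ := hx t
    have hxs : ∑ p : Fin d × Fin d × Fin d, x t p.1 p.2.1 p.2.2 ≤ 1 := by
      have heq : (fun p : Fin d × Fin d × Fin d => x t p.1 p.2.1 p.2.2)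
          = fun p => if p = (i₀, j₀, k₀) then (1 : ℝ) else 0 := by
        funext p
        rw [hxt]
        congr 1
        simp [Prod.ext_iff]
      rw [heq, Finset.sum_ite_eq' Finset.univ (i₀, j₀, k₀) (fun _ => (1 : ℝ))]
      simp
    have hx0 : ∀ p : Fin d × Fin d × Fin d, 0 ≤ x t p.1 p.2.1 p.2.2 := by
      intro p
      rw [hxt]
      split <;> norm_num
    have key := key_loss (fun p : Fin d × Fin d × Fin d => x t p.1 p.2.1 p.2.2)
      (fun p => A (t - 1) p.1 p.2.1 p.2.2) (fun p => A t p.1 p.2.1 p.2.2)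
      hxs hx0
      (fun p => hAnn (t - 1) (by omega) p.1 p.2.1 p.2.2)
      (fun p => hAnn t (by omega) p.1 p.2.1 p.2.2)
      (hAsum (t - 1) (by omega)) (hAsum t (by omega))
      (1 / (t : ℝ)) (by positivity)
      (fun p => hdiff t ht2 p.1 p.2.1 p.2.2)
    rw [tri (fun i j k => (x t i j k - A (t - 1) i j k) ^ 2),
      tri (fun i j k => (x t i j k - A t i j k) ^ 2)]
    calc _ ≤ 4 * (1 / (t : ℝ)) := key
      _ ≤ 4 * Real.sqrt ((d : ℝ) ^ 3) * (1 / (t : ℝ)) := by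
        have h1t : (0 : ℝ) ≤ 1 / (t : ℝ) := by positivity
        nlinarith
  constructor
  · calc ∑ t ∈ Finset.Icc 2 n, _
        ≤ ∑ t ∈ Finset.Icc 2 n, 4 * Real.sqrt ((d : ℝ) ^ 3) * (1 / (t : ℝ)) :=
          Finset.sum_le_sum hstep
      _ = 4 * Real.sqrt ((d : ℝ) ^ 3) * ∑ t ∈ Finset.Icc 2 n, (1 / (t : ℝ)) := by
          rw [Finset.mul_sum]
  · exact mul_le_mul_of_nonneg_left (sum_inv_le_log n hn) (by positivity)
end

section
/- Regret bound with reservoir sampling in the noise-free setting (Theorem 2, full): assume P(∃ t,i,j,k : |M̃_{t−1}(i,j,k) − M̄_{t−1}(i,j,k)| ≥ ε) = δ, where M̃_{t−1} and M̄_{t−1} are probability tensors in [0,1]^{d×d×d}, and ℓ_t(M) = ‖x_t − M‖_F² for one-hot x_t with Σ_{t=1}^n E[ℓ_t(M̄_{t−1}) − ℓ_t(M̄_n)] ≤ 4·sqrt(d³)·log n. Then R(n) = Σ_{t=1}^n E[ℓ_t(M̃_{t−1}) − ℓ_t(M̄_n)] ≤ 4·sqrt(d³)·ε·n + 4·sqrt(d³)·δ·n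 + 4·sqrt(d³)·log n. -/
open MeasureTheory ProbabilityTheory Finset

lemma aux_termwise_diff (x A B ε : ℝ) (hx0 : 0 ≤ x) (hA : A ∈ Set.Icc (0:ℝ) 1)
    (hB : B ∈ Set.Icc (0:ℝ) 1) (hAB : |A - B| ≤ ε) :
    (x - A)^2 - (x - B)^2 ≤ ε * (2*x + A + B) := by
  obtain ⟨hA0, hA1⟩ := hA
  obtain ⟨hB0, hB1⟩ := hB
  obtain ⟨h1, h2⟩ := abs_le.mp hAB
  nlinarith [mul_nonneg (by linarith : (0:ℝ) ≤ ε - (A - B)) (by nlinarith : (0:ℝ) ≤ 2*x + A + B - ((x-A)+(x-B))),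
    mul_nonneg (by linarith : (0:ℝ) ≤ ε + (A - B)) (by nlinarith : (0:ℝ) ≤ 2*x + A + B + ((x-A)+(x-B)))]

lemma aux_termwise_sq (x A : ℝ) (hx0 : 0 ≤ x) (hx1 : x ≤ 1) (hA : A ∈ Set.Icc (0:ℝ) 1) :
    (x - A)^2 ≤ x + A := by
  obtain ⟨hA0, hA1⟩ := hA
  nlinarith

lemma aux_loss_diff_le {d : ℕ} (x A B : Fin d → Fin d → Fin d → ℝ) (ε : ℝ)
    (hx0 : ∀ i j k, 0 ≤ x i j k)
    (hA : ∀ i j k, A i j k ∈ Set.Icc (0:ℝ) 1) (hB : ∀ i j k, B i j k ∈ Set.Icc (0:ℝ) 1)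
    (hxs : ∑ i, ∑ j, ∑ k, x i j k = 1)
    (hAs : ∑ i, ∑ j, ∑ k, A i j k = 1) (hBs : ∑ i, ∑ j, ∑ k, B i j k = 1)
    (hAB : ∀ i j k, |A i j k - B i j k| ≤ ε) :
    (∑ i, ∑ j, ∑ k, (x i j k - A i j k)^2) - (∑ i, ∑ j, ∑ k, (x i j k - B i j k)^2)
      ≤ 4 * ε := by
  have step : (∑ i, ∑ j, ∑ k, (x i j k - A i j k)^2) - (∑ i, ∑ j, ∑ k, (x i j k - B i j k)^2)
      ≤ ∑ i, ∑ j, ∑ k, ε * (2 * x i j k + A i j k + B i j k) := by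
    rw [← Finset.sum_sub_distrib]
    refine Finset.sum_le_sum fun i _ => ?_
    rw [← Finset.sum_sub_distrib]
    refine Finset.sum_le_sum fun j _ => ?_
    rw [← Finset.sum_sub_distrib]
    refine Finset.sum_le_sum fun k _ => ?_
    exact aux_termwise_diff _ _ _ _ (hx0 i j k) (hA i j k) (hB i j k) (hAB i j k)
  refine step.trans ?_
  have heq : ∑ i, ∑ j, ∑ k, ε * (2 * x i j k + A i j k + B i j k)
      = ε * (2 * (∑ i, ∑ j, ∑ k, x i j k) + (∑ i, ∑ j, ∑ k, A i j k)
          + (∑ i, ∑ j, ∑ k, B i j k)) := by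
    simp only [← Finset.mul_sum, Finset.sum_add_distrib]
  rw [heq, hxs, hAs, hBs]; ring_nf; linarith [le_refl (4*ε)]

lemma aux_loss_le_two {d : ℕ} (x A : Fin d → Fin d → Fin d → ℝ)
    (hx0 : ∀ i j k, 0 ≤ x i j k) (hx1 : ∀ i j k, x i j k ≤ 1)
    (hA : ∀ i j k, A i j k ∈ Set.Icc (0:ℝ) 1)
    (hxs : ∑ i, ∑ j, ∑ k, x i j k = 1)
    (hAs : ∑ i, ∑ j, ∑ k, A i j k = 1) :
    ∑ i, ∑ j, ∑ k, (x i j k - A i j k)^2 ≤ 2 := by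
  have step : ∑ i, ∑ j, ∑ k, (x i j k - A i j k)^2
      ≤ ∑ i, ∑ j, ∑ k, (x i j k + A i j k) := by
    refine Finset.sum_le_sum fun i _ => Finset.sum_le_sum fun j _ => Finset.sum_le_sum fun k _ => ?_
    exact aux_termwise_sq _ _ (hx0 i j k) (hx1 i j k) (hA i j k)
  refine step.trans ?_
  simp only [Finset.sum_add_distrib]
  rw [hxs, hAs]; norm_num

lemma aux_loss_nonneg {d : ℕ} (x A : Fin d → Fin d → Fin d → ℝ) :
    (0:ℝ) ≤ ∑ i, ∑ j, ∑ k, (x i j k - A i j k)^2 := by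
  positivity

lemma aux_integrable_loss {d : ℕ} {Ω : Type*} [MeasureSpace Ω]
    [IsProbabilityMeasure (ℙ : Measure Ω)]
    (u : Ω → Fin d → Fin d → Fin d → ℝ) (v : Ω → Fin d → Fin d → Fin d → ℝ)
    (hu : ∀ i j k, Measurable (fun ω => u ω i j k))
    (hv : ∀ i j k, Measurable (fun ω => v ω i j k))
    (hub : ∀ ω i j k, u ω i j k ∈ Set.Icc (0:ℝ) 1)
    (hvb : ∀ ω i j k, v ω i j k ∈ Set.Icc (0:ℝ) 1) :
    Integrable (fun ω => ∑ i, ∑ j, ∑ k, (u ω i j k - v ω i j k)^2) := by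
  have hm : Measurable (fun ω => ∑ i, ∑ j, ∑ k, (u ω i j k - v ω i j k)^2) := by
    refine Finset.measurable_sum _ fun i _ => Finset.measurable_sum _ fun j _ =>
      Finset.measurable_sum _ fun k _ => ?_
    exact ((hu i j k).sub (hv i j k)).pow_const 2
  refine (integrable_const ((d:ℝ)^3)).mono' hm.aestronglyMeasurable
    (Filter.Eventually.of_forall fun ω => ?_)
  have h1 : ∀ i j k : Fin d, (u ω i j k - v ω i j k)^2 ≤ 1 := fun i j k => by
    have h := hub ω i j k; have h' := hvb ω i j k
    simp only [Set.mem_Icc] at h h'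
    nlinarith [h.1, h.2, h'.1, h'.2]
  rw [Real.norm_eq_abs, abs_of_nonneg (by positivity)]
  calc ∑ i, ∑ j, ∑ k, (u ω i j k - v ω i j k)^2
      ≤ ∑ _i : Fin d, ∑ _j : Fin d, ∑ _k : Fin d, (1:ℝ) :=
        Finset.sum_le_sum fun i _ => Finset.sum_le_sum fun j _ =>
          Finset.sum_le_sum fun k _ => h1 i j k
    _ = (d:ℝ)^3 := by simp; ring

/-- regret bound with reservoir sampling in the noise-free setting
(Theorem 2, full). -/
theorem reservoir_regret_bound
    {d : ℕ} (n : ℕ) {Ω : Type*} [MeasureSpace Ω] [IsProbabilityMeasure (ℙ : Measure Ω)]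
    (ε δ : ℝ) (hε : ε ∈ Set.Icc (0 : ℝ) 1) (hδ : δ ∈ Set.Icc (0 : ℝ) 1)
    (x : ℕ → Ω → Fin d → Fin d → Fin d → ℝ)
    (hmeas : ∀ t i j k, Measurable (fun ω => x t ω i j k))
    (hx : ∀ t ω, ∃ i₀ j₀ k₀ : Fin d, ∀ i j k,
      x t ω i j k = if i = i₀ ∧ j = j₀ ∧ k = k₀ then 1 else 0)
    (Mt : ℕ → Ω → Fin d → Fin d → Fin d → ℝ)   -- reservoir estimate M̃
    (Mb : ℕ → Fin d → Fin d → Fin d → ℝ)       -- running average M̄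
    (hMtmeas : ∀ t i j k, Measurable (fun ω => Mt t ω i j k))
    (hMt : ∀ t ω i j k, Mt t ω i j k ∈ Set.Icc (0 : ℝ) 1)
    (hMb : ∀ t i j k, Mb t i j k ∈ Set.Icc (0 : ℝ) 1)
    (hMtsum : ∀ t ω, ∑ i, ∑ j, ∑ k, Mt t ω i j k = 1)
    (hMbsum : ∀ t, ∑ i, ∑ j, ∑ k, Mb t i j k = 1)
    (hbad : (ℙ {ω : Ω | ∃ t ∈ Finset.Icc 1 n, ∃ i j k : Fin d,
      ε ≤ |Mt (t - 1) ω i j k - Mb (t - 1) i j k|}).toReal = δ)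
    (hMbregret : ∑ t ∈ Finset.Icc 1 n,
        ∫ ω, ((∑ i, ∑ j, ∑ k, (x t ω i j k - Mb (t - 1) i j k) ^ 2)
          - (∑ i, ∑ j, ∑ k, (x t ω i j k - Mb n i j k) ^ 2))
        ≤ 4 * Real.sqrt ((d : ℝ) ^ 3) * Real.log n) :
    ∑ t ∈ Finset.Icc 1 n,
        ∫ ω, ((∑ i, ∑ j, ∑ k, (x t ω i j k - Mt (t - 1) ω i j k) ^ 2)
          - (∑ i, ∑ j, ∑ k, (x t ω i j k - Mb n i j k) ^ 2))
      ≤ 4 * Real.sqrt ((d : ℝ) ^ 3) * ε * n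
        + 4 * Real.sqrt ((d : ℝ) ^ 3) * δ * n
        + 4 * Real.sqrt ((d : ℝ) ^ 3) * Real.log n := by
  rcases Nat.eq_zero_or_pos n with hn | hn
  · subst hn
    simp [Real.log_zero]
  -- nontrivial case: n ≥ 1
  have hΩ : Nonempty Ω := by
    by_contra h
    rw [not_nonempty_iff] at h
    have h1 : (ℙ : Measure Ω) Set.univ = 1 := measure_univ
    rw [Set.univ_eq_empty_iff.mpr h, measure_empty] at h1
    exact zero_ne_one h1
  obtain ⟨ω₀⟩ := hΩ
  have hd : 0 < d := by
    by_contra h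
    push_neg at h
    interval_cases d
    have := hMtsum 0 ω₀
    simp at this
  have hC4 : (4:ℝ) ≤ 4 * Real.sqrt ((d : ℝ) ^ 3) := by
    have h1 : (1:ℝ) ≤ (d:ℝ)^3 := by
      have h : (1:ℝ) ≤ (d:ℝ) := by exact_mod_cast hd
      nlinarith [mul_nonneg (sub_nonneg.mpr h) (by positivity : (0:ℝ) ≤ (d:ℝ)^2 + d + 1)]
    nlinarith [Real.sq_sqrt (by positivity : (0:ℝ) ≤ (d:ℝ)^3),
      Real.sqrt_nonneg ((d:ℝ)^3)]
  -- one-hot facts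
  have hx0 : ∀ t ω i j k, 0 ≤ x t ω i j k := by
    intro t ω i j k
    obtain ⟨i₀, j₀, k₀, h⟩ := hx t ω
    rw [h]; split <;> norm_num
  have hx1 : ∀ t ω i j k, x t ω i j k ≤ 1 := by
    intro t ω i j k
    obtain ⟨i₀, j₀, k₀, h⟩ := hx t ω
    rw [h]; split <;> norm_num
  have hxs : ∀ t ω, ∑ i, ∑ j, ∑ k, x t ω i j k = 1 := by
    intro t ω
    obtain ⟨i₀, j₀, k₀, h⟩ := hx t ω
    simp only [h]
    simp [Finset.sum_ite_eq', ite_and]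
  have hxIcc : ∀ t ω i j k, x t ω i j k ∈ Set.Icc (0:ℝ) 1 :=
    fun t ω i j k => ⟨hx0 t ω i j k, hx1 t ω i j k⟩
  -- the bad event
  set bad : Set Ω := {ω : Ω | ∃ t ∈ Finset.Icc 1 n, ∃ i j k : Fin d,
      ε ≤ |Mt (t - 1) ω i j k - Mb (t - 1) i j k|} with hbaddef
  have hbadmeas : MeasurableSet bad := by
    have heq : bad = ⋃ t ∈ Finset.Icc 1 n, ⋃ i : Fin d, ⋃ j : Fin d, ⋃ k : Fin d,
        {ω : Ω | ε ≤ |Mt (t - 1) ω i j k - Mb (t - 1) i j k|} := by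
      ext ω; simp [hbaddef]
    rw [heq]
    refine MeasurableSet.biUnion (Finset.Icc 1 n).countable_toSet fun t _ =>
      MeasurableSet.iUnion fun i => MeasurableSet.iUnion fun j =>
        MeasurableSet.iUnion fun k => ?_
    exact measurableSet_le measurable_const ((hMtmeas (t-1) i j k).sub measurable_const).abs
  -- integrability
  have I1 : ∀ t : ℕ, Integrable (fun ω => ∑ i, ∑ j, ∑ k,
      (x t ω i j k - Mt (t - 1) ω i j k) ^ 2) := fun t =>
    aux_integrable_loss _ _ (hmeas t) (hMtmeas (t-1)) (fun ω => hxIcc t ω)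
      (fun ω => hMt (t-1) ω)
  have I2 : ∀ t : ℕ, Integrable (fun ω => ∑ i, ∑ j, ∑ k,
      (x t ω i j k - Mb (t - 1) i j k) ^ 2) := fun t =>
    aux_integrable_loss _ (fun _ => Mb (t-1)) (hmeas t) (fun _ _ _ => measurable_const)
      (fun ω => hxIcc t ω) (fun _ => hMb (t-1))
  have I3 : ∀ t : ℕ, Integrable (fun ω => ∑ i, ∑ j, ∑ k,
      (x t ω i j k - Mb n i j k) ^ 2) := fun t =>
    aux_integrable_loss _ (fun _ => Mb n) (hmeas t) (fun _ _ _ => measurable_const)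
      (fun ω => hxIcc t ω) (fun _ => hMb n)
  -- pointwise key bound
  have key : ∀ t ∈ Finset.Icc 1 n, ∀ ω : Ω,
      (∑ i, ∑ j, ∑ k, (x t ω i j k - Mt (t - 1) ω i j k) ^ 2)
        - (∑ i, ∑ j, ∑ k, (x t ω i j k - Mb (t - 1) i j k) ^ 2)
      ≤ 4 * ε + bad.indicator (fun _ => (4:ℝ)) ω := by
    intro t ht ω
    by_cases hω : ω ∈ bad
    · rw [Set.indicator_of_mem hω]
      have hle2 : (∑ i, ∑ j, ∑ k, (x t ω i j k - Mt (t - 1) ω i j k) ^ 2) ≤ 2 :=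
        aux_loss_le_two _ _ (hx0 t ω) (hx1 t ω) (hMt (t-1) ω) (hxs t ω) (hMtsum (t-1) ω)
      have hge0 : (0:ℝ) ≤ ∑ i, ∑ j, ∑ k, (x t ω i j k - Mb (t - 1) i j k) ^ 2 :=
        aux_loss_nonneg _ _
      have hε0 := hε.1
      linarith
    · rw [Set.indicator_of_notMem hω, add_zero]
      have hgood : ∀ i j k : Fin d, |Mt (t - 1) ω i j k - Mb (t - 1) i j k| ≤ ε := by
        intro i j k
        by_contra hc
        push_neg at hc
        exact hω ⟨t, ht, i, j, k, hc.le⟩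
      exact aux_loss_diff_le _ _ _ ε (hx0 t ω) (hMt (t-1) ω) (hMb (t-1)) (hxs t ω)
        (hMtsum (t-1) ω) (hMbsum (t-1)) hgood
  -- integral bound for the reservoir-vs-average part
  have hstep1 : ∀ t ∈ Finset.Icc 1 n,
      ∫ ω, ((∑ i, ∑ j, ∑ k, (x t ω i j k - Mt (t - 1) ω i j k) ^ 2)
        - (∑ i, ∑ j, ∑ k, (x t ω i j k - Mb (t - 1) i j k) ^ 2))
      ≤ 4 * ε + 4 * δ := by
    intro t ht
    have hInt : Integrable (fun ω =>
        (∑ i, ∑ j, ∑ k, (x t ω i j k - Mt (t - 1) ω i j k) ^ 2)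
          - (∑ i, ∑ j, ∑ k, (x t ω i j k - Mb (t - 1) i j k) ^ 2)) := (I1 t).sub (I2 t)
    have hIntR : Integrable (fun ω => 4 * ε + bad.indicator (fun _ => (4:ℝ)) ω) :=
      (integrable_const (4*ε)).add ((integrable_const 4).indicator hbadmeas)
    have := integral_mono hInt hIntR (key t ht)
    refine this.trans ?_
    rw [integral_add (integrable_const (4*ε)) ((integrable_const 4).indicator hbadmeas),
      integral_const, integral_indicator_const _ hbadmeas]
    simp only [measureReal_def, measure_univ, ENNReal.toReal_one, one_smul, smul_eq_mul]
    rw [hbad]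
    linarith
  -- combine
  have hsplit : ∑ t ∈ Finset.Icc 1 n,
      ∫ ω, ((∑ i, ∑ j, ∑ k, (x t ω i j k - Mt (t - 1) ω i j k) ^ 2)
        - (∑ i, ∑ j, ∑ k, (x t ω i j k - Mb n i j k) ^ 2))
      = (∑ t ∈ Finset.Icc 1 n,
          ∫ ω, ((∑ i, ∑ j, ∑ k, (x t ω i j k - Mt (t - 1) ω i j k) ^ 2)
            - (∑ i, ∑ j, ∑ k, (x t ω i j k - Mb (t - 1) i j k) ^ 2)))
        + (∑ t ∈ Finset.Icc 1 n,
          ∫ ω, ((∑ i, ∑ j, ∑ k, (x t ω i j k - Mb (t - 1) i j k) ^ 2)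
            - (∑ i, ∑ j, ∑ k, (x t ω i j k - Mb n i j k) ^ 2))) := by
    rw [← Finset.sum_add_distrib]
    refine Finset.sum_congr rfl fun t _ => ?_
    rw [integral_sub (I1 t) (I3 t), integral_sub (I1 t) (I2 t), integral_sub (I2 t) (I3 t)]
    ring
  rw [hsplit]
  have hsum1 : (∑ t ∈ Finset.Icc 1 n,
      ∫ ω, ((∑ i, ∑ j, ∑ k, (x t ω i j k - Mt (t - 1) ω i j k) ^ 2)
        - (∑ i, ∑ j, ∑ k, (x t ω i j k - Mb (t - 1) i j k) ^ 2)))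
      ≤ (n : ℝ) * (4 * ε + 4 * δ) := by
    calc (∑ t ∈ Finset.Icc 1 n,
        ∫ ω, ((∑ i, ∑ j, ∑ k, (x t ω i j k - Mt (t - 1) ω i j k) ^ 2)
          - (∑ i, ∑ j, ∑ k, (x t ω i j k - Mb (t - 1) i j k) ^ 2)))
        ≤ ∑ _t ∈ Finset.Icc 1 n, (4 * ε + 4 * δ) := Finset.sum_le_sum hstep1
      _ = (n : ℝ) * (4 * ε + 4 * δ) := by
          rw [Finset.sum_const, Nat.card_Icc, Nat.add_sub_cancel, nsmul_eq_mul]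
  have hfinal : (n : ℝ) * (4 * ε + 4 * δ)
      ≤ 4 * Real.sqrt ((d : ℝ) ^ 3) * ε * n + 4 * Real.sqrt ((d : ℝ) ^ 3) * δ * n := by
    have hn0 : (0:ℝ) ≤ (n:ℝ) := Nat.cast_nonneg n
    nlinarith [hε.1, hδ.1, mul_nonneg hε.1 hn0, mul_nonneg hδ.1 hn0]
  linarith [hMbregret]
end

section
/- Recovery of mixture weights from whitened eigenvalues: suppose M_2 = Σ_{c=1}^K ω_c·u_c u_c^T with ω_c > 0 and u_1,...,u_K ∈ ℝ^d linearly independent, and W ∈ ℝ^{d×K} is a whitening matrix satisfying W^T M_2 W = I_K. Then the vectors v_c = sqrt(ω_c)·W^T u_c, c ∈ [K], form an orthonormal basis of ℝ^K, and the whitened third moment T = Σ_c ω_c (W^T u_c)^{⊗3} equals Σ_c (1/sqrt(ω_c))·v_c^{⊗3}; in particular the eigenvalues λ_c = 1/sqrt(ω_c) of T recover the weights via ω_c = 1/λ_c². -/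
open Finset Matrix

/-- recovery of mixture weights from whitened eigenvalues: if
Wᵀ M₂ W = I_K, the whitened rescaled vectors v_c = √ω_c · Wᵀ u_c form an
orthonormal basis of ℝ^K, the whitened third moment equals
Σ_c (1/√ω_c)·v_c⊗v_c⊗v_c, and ω_c = 1/λ_c² with λ_c = 1/√ω_c. -/
theorem whitening_recovery
    {K d : ℕ}
    (w : Fin K → ℝ) (hw : ∀ c, 0 < w c)
    (u : Fin K → Fin d → ℝ) (hu : LinearIndependent ℝ u)
    (W : Matrix (Fin d) (Fin K) ℝ)
    (hW : Wᵀ * (∑ c, w c • Matrix.vecMulVec (u c) (u c)) * W = 1)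
    (v : Fin K → EuclideanSpace ℝ (Fin K))
    (hv : ∀ c a, v c a = Real.sqrt (w c) * (Wᵀ.mulVec (u c)) a) :
    Orthonormal ℝ v ∧
      Submodule.span ℝ (Set.range v) = ⊤ ∧
      (∀ a b e : Fin K,
        (∑ c, w c * (Wᵀ.mulVec (u c) a * (Wᵀ.mulVec (u c) b * Wᵀ.mulVec (u c) e)))
          = ∑ c, (1 / Real.sqrt (w c)) * (v c a * (v c b * v c e))) ∧
      (∀ c, w c = 1 / (1 / Real.sqrt (w c)) ^ 2) := by
  have key : ∀ a b, (∑ c, w c * (Wᵀ.mulVec (u c) a * Wᵀ.mulVec (u c) b))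
      = if a = b then 1 else 0 := by
    intro a b
    have h := congrFun (congrFun hW a) b
    simp only [Matrix.mul_apply, Matrix.one_apply, Matrix.sum_apply, Matrix.smul_apply,
      Matrix.vecMulVec_apply, Matrix.mulVec, dotProduct, Matrix.transpose_apply,
      smul_eq_mul, Finset.sum_mul, Finset.mul_sum] at h ⊢
    rw [← h]
    rw [Finset.sum_comm]
    refine Finset.sum_congr rfl fun j _ => ?_
    rw [Finset.sum_comm]
    refine Finset.sum_congr rfl fun c _ => ?_
    refine Finset.sum_congr rfl fun i _ => ?_
    ring
  -- the Gram-type identity: ∑_c v c a * v c b = δ_{ab}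
  have key' : ∀ a b, (∑ c, v c a * v c b) = if a = b then 1 else 0 := by
    intro a b
    rw [← key a b]
    refine Finset.sum_congr rfl fun c _ => ?_
    rw [hv, hv]
    have h2 := Real.mul_self_sqrt (hw c).le
    ring_nf
    rw [Real.sq_sqrt (hw c).le]
    ring
  -- matrix V with V a c = v c a satisfies V * Vᵀ = 1, hence Vᵀ * V = 1
  set V : Matrix (Fin K) (Fin K) ℝ := Matrix.of fun a c => v c a with hV
  have hVVt : V * Vᵀ = 1 := by
    ext a b
    simp only [Matrix.mul_apply, Matrix.transpose_apply, Matrix.one_apply, hV, Matrix.of_apply]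
    exact key' a b
  have hVtV : Vᵀ * V = 1 := mul_eq_one_comm.mp hVVt
  have gram : ∀ c c', (∑ a, v c a * v c' a) = if c = c' then 1 else 0 := by
    intro c c'
    have h := congrFun (congrFun hVtV c) c'
    simpa [Matrix.mul_apply, Matrix.transpose_apply, Matrix.one_apply, hV] using h
  have horth : Orthonormal ℝ v := by
    rw [orthonormal_iff_ite]
    intro i j
    simpa [PiLp.inner_apply, RCLike.inner_apply, mul_comm] using gram i j
  refine ⟨horth, ?_, ?_, ?_⟩
  · have hli := horth.linearIndependent
    rcases Nat.eq_zero_or_pos K with hK | hK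
    · subst hK
      exact Subsingleton.elim _ _
    · have : Nonempty (Fin K) := ⟨⟨0, hK⟩⟩
      apply LinearIndependent.span_eq_top_of_card_eq_finrank hli
      simp
  · intro a b e
    refine Finset.sum_congr rfl fun c _ => ?_
    rw [hv, hv, hv]
    have hs : Real.sqrt (w c) ≠ 0 := (Real.sqrt_pos.mpr (hw c)).ne'
    have h2 := Real.mul_self_sqrt (hw c).le
    rw [one_div, inv_mul_eq_div, eq_div_iff hs]
    linear_combination (-(Wᵀ.mulVec (u c) a * Wᵀ.mulVec (u c) b * Wᵀ.mulVec (u c) e *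
      Real.sqrt (w c))) * h2
  · intro c
    rw [one_div, one_div, inv_pow, inv_inv, Real.sq_sqrt (hw c).le]
end
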